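/- For n ≥ 1, (X-1728)·A_{n,8}(X) = A_{n+1,2}(X) - (6(12n-1)(12n+7)/(n(2n+1)))·A_{n,2}(X), where A_{n,2} and A_{n,8} are Atkin-like polynomials defined by three-term recursions. -/

import Mathlib

open Polynomial

/-- Recursion coefficient `a_{n,2} = 24(144n²-29)/((2n+1)(2n-1))`. -/
noncomputable def a2 (n : ℕ) : ℚ :=
  24 * (144 * (n : ℚ) ^ 2 - 29) / ((2 * (n : ℚ) + 1) * (2 * (n : ℚ) - 1))

/-- Recursion coefficient `b_{n,2} = 36(12n-13)(12n-7)(12n-5)(12n+1)/(n(n-1)(2n-1)²)`. -/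
noncomputable def b2 (n : ℕ) : ℚ :=
  36 * (12 * (n : ℚ) - 13) * (12 * (n : ℚ) - 7) * (12 * (n : ℚ) - 5) * (12 * (n : ℚ) + 1) /
    ((n : ℚ) * ((n : ℚ) - 1) * (2 * (n : ℚ) - 1) ^ 2)

/-- The monic Atkin polynomials `A_{n,2}(X)`, defined by the three-term recursion
`A_{n+1,2} = (X - a_n)A_{n,2} - b_n A_{n-1,2}` for `n ≥ 2`. -/
noncomputable def A2 : ℕ → Polynomial ℚ
  | 0 => 1
  | 1 => X - C 720
  | 2 => X ^ 2 - C 1640 * X + C 269280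
  | n + 3 => (X - C (a2 (n + 2))) * A2 (n + 2) - C (b2 (n + 2)) * A2 (n + 1)

/-- Recursion coefficient `a_{n,8} = a_{n+1/2,2} = 24(144(n+1/2)²-29)/((2n+2)(2n))`. -/
noncomputable def a8 (n : ℕ) : ℚ :=
  24 * (144 * ((n : ℚ) + 1 / 2) ^ 2 - 29) / ((2 * (n : ℚ) + 2) * (2 * (n : ℚ)))

/-- Recursion coefficient
`b_{n,8} = b_{n+1/2,2} = 36(12n-7)(12n-1)(12n+1)(12n+7)·4/((2n+1)(2n-1)(2n)²)`. -/
noncomputable def b8 (n : ℕ) : ℚ :=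
  36 * (12 * (n : ℚ) - 7) * (12 * (n : ℚ) - 1) * (12 * (n : ℚ) + 1) * (12 * (n : ℚ) + 7) * 4 /
    ((2 * (n : ℚ) + 1) * (2 * (n : ℚ) - 1) * (2 * (n : ℚ)) ^ 2)

/-- The monic Atkin-like polynomials `A_{n,8}(X)`, defined by the three-term recursion
`A_{n+1,8} = (X - a_{n,8})A_{n,8} - b_{n,8} A_{n-1,8}` for `n ≥ 1`. -/
noncomputable def A8 : ℕ → Polynomial ℚ
  | 0 => 1
  | 1 => X - C 330
  | n + 2 => (X - C (a8 (n + 1))) * A8 (n + 1) - C (b8 (n + 1)) * A8 n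

/-- Abbreviation for the combination coefficient. -/
noncomputable def cc (n : ℕ) : ℚ :=
  6 * (12 * (n : ℚ) - 1) * (12 * (n : ℚ) + 7) / ((n : ℚ) * (2 * (n : ℚ) + 1))

private lemma scalars (n : ℕ) :
    a2 (n + 3) + cc (n + 3) = a8 (n + 2) + cc (n + 2) ∧
    cc (n + 2) * a2 (n + 2) + b8 (n + 2) = a8 (n + 2) * cc (n + 2) + b2 (n + 3) ∧
    cc (n + 2) * b2 (n + 2) = b8 (n + 2) * cc (n + 1) := by
  have hq : (0:ℚ) ≤ (n:ℚ) := Nat.cast_nonneg n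
  have d1 : (2 * ((n:ℚ) + 3) + 1) * (2 * ((n:ℚ) + 3) - 1) ≠ 0 :=
    mul_ne_zero (by nlinarith) (by nlinarith)
  have d2 : ((n:ℚ) + 3) * (2 * ((n:ℚ) + 3) + 1) ≠ 0 :=
    mul_ne_zero (by nlinarith) (by nlinarith)
  have d3 : (2 * ((n:ℚ) + 2) + 2) * (2 * ((n:ℚ) + 2)) ≠ 0 :=
    mul_ne_zero (by nlinarith) (by nlinarith)
  have d4 : ((n:ℚ) + 2) * (2 * ((n:ℚ) + 2) + 1) ≠ 0 :=
    mul_ne_zero (by nlinarith) (by nlinarith)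
  have d5 : (2 * ((n:ℚ) + 2) + 1) * (2 * ((n:ℚ) + 2) - 1) ≠ 0 :=
    mul_ne_zero (by nlinarith) (by nlinarith)
  have d6 : (2 * ((n:ℚ) + 2) + 1) * (2 * ((n:ℚ) + 2) - 1) * (2 * ((n:ℚ) + 2)) ^ 2 ≠ 0 :=
    mul_ne_zero d5 (by positivity)
  have d7 : ((n:ℚ) + 3) * ((n:ℚ) + 3 - 1) * (2 * ((n:ℚ) + 3) - 1) ^ 2 ≠ 0 :=
    mul_ne_zero (mul_ne_zero (by nlinarith) (by nlinarith)) (by nlinarith)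
  have d8 : ((n:ℚ) + 2) * ((n:ℚ) + 2 - 1) * (2 * ((n:ℚ) + 2) - 1) ^ 2 ≠ 0 :=
    mul_ne_zero (mul_ne_zero (by nlinarith) (by nlinarith)) (by nlinarith)
  have d9 : ((n:ℚ) + 1) * (2 * ((n:ℚ) + 1) + 1) ≠ 0 :=
    mul_ne_zero (by nlinarith) (by nlinarith)
  have f1 : 2 * ((n:ℚ) + 2) - 1 ≠ 0 := by nlinarith
  have f2 : 2 * ((n:ℚ) + 3) - 1 ≠ 0 := by nlinarith
  have f3 : (n:ℚ) + 3 - 1 ≠ 0 := by nlinarith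
  have f4 : (n:ℚ) + 2 - 1 ≠ 0 := by nlinarith
  have f5 : 2 * ((n:ℚ) + 2) + 1 ≠ 0 := by nlinarith
  have f6 : 2 * ((n:ℚ) + 3) + 1 ≠ 0 := by nlinarith
  have f7 : 2 * ((n:ℚ) + 1) + 1 ≠ 0 := by nlinarith
  have f8 : 2 * ((n:ℚ) + 2) + 2 ≠ 0 := by nlinarith
  have f9 : 2 * ((n:ℚ) + 2) ≠ 0 := by nlinarith
  have f10 : (n:ℚ) + 1 ≠ 0 := by nlinarith
  have f11 : (n:ℚ) + 2 ≠ 0 := by nlinarith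
  have f12 : (n:ℚ) + 3 ≠ 0 := by nlinarith
  have f13 : ((n:ℚ) + 3) * 2 - 1 ≠ 0 := by nlinarith
  refine ⟨?_, ?_, ?_⟩ <;>
  · simp only [a2, b2, a8, b8, cc]
    push_cast
    field_simp [f1, f2, f3, f4, f5, f6, f7, f8, f9, f10, f11, f12, f13]
    ring

private lemma key_step (n : ℕ)
    (ih1 : (X - C 1728) * A8 (n + 1) = A2 (n + 2) - C (cc (n + 1)) * A2 (n + 1))
    (ih2 : (X - C 1728) * A8 (n + 2) = A2 (n + 3) - C (cc (n + 2)) * A2 (n + 2)) :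
    (X - C 1728) * A8 (n + 3) = A2 (n + 4) - C (cc (n + 3)) * A2 (n + 3) := by
  obtain ⟨sc1, sc2, sc3⟩ := scalars n
  have s1 : C (a2 (n + 3)) + C (cc (n + 3)) = C (a8 (n + 2)) + C (cc (n + 2)) := by
    rw [← C_add, ← C_add, sc1]
  have s2 : C (cc (n + 2)) * C (a2 (n + 2)) + C (b8 (n + 2)) =
      C (a8 (n + 2)) * C (cc (n + 2)) + C (b2 (n + 3)) := by
    rw [← C_mul, ← C_mul, ← C_add, ← C_add, sc2]
  have s3 : C (cc (n + 2)) * C (b2 (n + 2)) = C (b8 (n + 2)) * C (cc (n + 1)) := by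
    rw [← C_mul, ← C_mul, sc3]
  have e8 : A8 (n + 3) = (X - C (a8 (n + 2))) * A8 (n + 2) - C (b8 (n + 2)) * A8 (n + 1) := rfl
  have e2 : A2 (n + 4) = (X - C (a2 (n + 3))) * A2 (n + 3) - C (b2 (n + 3)) * A2 (n + 2) := rfl
  have hrec : A2 (n + 3) = (X - C (a2 (n + 2))) * A2 (n + 2) - C (b2 (n + 2)) * A2 (n + 1) := rfl
  rw [e8, e2]
  linear_combination (X - C (a8 (n + 2))) * ih2 - C (b8 (n + 2)) * ih1 +
    C (cc (n + 2)) * hrec + A2 (n + 3) * s1 - A2 (n + 2) * s2 - A2 (n + 1) * s3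

private lemma base1 : (X - C 1728) * A8 1 = A2 2 - C (cc 1) * A2 1 := by
  have hc : cc 1 = 418 := by norm_num [cc]
  have e1 : A8 1 = X - C 330 := rfl
  have e2 : A2 1 = X - C 720 := rfl
  have e3 : A2 2 = X ^ 2 - C 1640 * X + C 269280 := rfl
  rw [hc, e1, e2, e3]
  refine Polynomial.funext fun x => ?_
  simp only [eval_mul, eval_sub, eval_add, eval_pow, eval_C, eval_X]
  ring

private lemma base2 : (X - C 1728) * A8 2 = A2 3 - C (cc 2) * A2 2 := by
  have hc : cc 2 = 2139 / 5 := by norm_num [cc]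
  have ha8 : a8 1 = 885 := by norm_num [a8]
  have hb8 : b8 1 = 163020 := by norm_num [b8]
  have ha2 : a2 2 = 4376 / 5 := by norm_num [a2]
  have hb2 : b2 2 = 177650 := by norm_num [b2]
  have e1 : A8 2 = (X - C (a8 1)) * A8 1 - C (b8 1) * A8 0 := rfl
  have e1' : A8 1 = X - C 330 := rfl
  have e0 : A8 0 = 1 := rfl
  have e2 : A2 2 = X ^ 2 - C 1640 * X + C 269280 := rfl
  have e2' : A2 1 = X - C 720 := rfl
  have e3 : A2 3 = (X - C (a2 2)) * A2 2 - C (b2 2) * A2 1 := rfl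
  rw [hc, e1, e1', e0, e3, e2, e2', ha8, hb8, ha2, hb2]
  refine Polynomial.funext fun x => ?_
  simp only [eval_mul, eval_sub, eval_add, eval_pow, eval_C, eval_X, eval_one]
  ring

private lemma key : ∀ n : ℕ,
    ((X - C 1728) * A8 (n + 1) = A2 (n + 2) - C (cc (n + 1)) * A2 (n + 1)) ∧
    ((X - C 1728) * A8 (n + 2) = A2 (n + 3) - C (cc (n + 2)) * A2 (n + 2)) := by
  intro n
  induction n with
  | zero => exact ⟨base1, base2⟩
  | succ n ih => exact ⟨ih.2, key_step n ih.1 ih.2⟩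


/-- For `n ≥ 1`,
`(X-1728)·A_{n,8}(X) = A_{n+1,2}(X) - (6(12n-1)(12n+7)/(n(2n+1)))·A_{n,2}(X)`. -/
theorem X_sub_1728_mul_A8_eq (n : ℕ) (hn : 1 ≤ n) :
    (X - C 1728) * A8 n =
      A2 (n + 1) -
        C (6 * (12 * (n : ℚ) - 1) * (12 * (n : ℚ) + 7) / ((n : ℚ) * (2 * (n : ℚ) + 1))) * A2 n := by
  obtain ⟨m, rfl⟩ : ∃ m, n = m + 1 := ⟨n - 1, by omega⟩
  exact (key m).1
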